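/- Explicit Berry-connection matrix in the 1D avoided-crossing model: let δ > 0, E(x) := √(x² + δ²), and let Θ(x) := (2(1 + x/E(x)))^{-1/2} · [[1 + x/E(x), δ/E(x)],[−δ/E(x), 1 + x/E(x)]]. Then for all x, p ∈ ℝ: p·Θ′(x)·Θ(x)ᵀ = [[0, −pδ/(2(x²+δ²))],[pδ/(2(x²+δ²)), 0]]; in particular the diagonal entries b⁺, b⁻ vanish identically and bⁱ(x,p) = −pδ/(2(x²+δ²)). -/

import Mathlib

open Matrix

/-- The diagonalizing frame for the 1D avoided-crossing model `u(x) = x`, `v ≡ δ`,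
with `E(x) = √(x² + δ²)`:
`Θ(x) = (2(1 + x/E))^{-1/2} · [[1 + x/E, δ/E],[−δ/E, 1 + x/E]]` (a real matrix). -/
noncomputable def Theta1D (δ x : ℝ) : Matrix (Fin 2) (Fin 2) ℝ :=
  let E : ℝ := Real.sqrt (x ^ 2 + δ ^ 2)
  (Real.sqrt (2 * (1 + x / E)))⁻¹ •
    !![1 + x / E, δ / E; -(δ / E), 1 + x / E]

set_option maxHeartbeats 1000000 in
/-- Explicit Berry-connection matrix in the 1D avoided-crossing model:
for `δ > 0` and all `x, p ∈ ℝ`,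
`p·Θ′(x)·Θ(x)ᵀ = [[0, −pδ/(2(x²+δ²))],[pδ/(2(x²+δ²)), 0]]`;
in particular `b⁺ = b⁻ = 0` and `bⁱ(x,p) = −pδ/(2(x²+δ²))`. -/
theorem berry_connection_1d (δ : ℝ) (hδ : 0 < δ) (x p : ℝ) :
    p • (Matrix.of fun k l => deriv (fun s => Theta1D δ s k l) x) * (Theta1D δ x)ᵀ =
      !![0, -(p * δ / (2 * (x ^ 2 + δ ^ 2)));
         p * δ / (2 * (x ^ 2 + δ ^ 2)), 0] := by
  have hδ2 : (0:ℝ) < x ^ 2 + δ ^ 2 := by positivity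
  set E := Real.sqrt (x ^ 2 + δ ^ 2) with hEdef
  have hEpos : 0 < E := Real.sqrt_pos.mpr hδ2
  have hEne : E ≠ 0 := ne_of_gt hEpos
  have hE2 : E ^ 2 = x ^ 2 + δ ^ 2 := Real.sq_sqrt hδ2.le
  have hEx : 0 < E + x := by nlinarith [sq_nonneg (E - x)]
  have hc : 0 < 1 + x / E := by
    have h : (1:ℝ) + x / E = (E + x) / E := by field_simp
    rw [h]; exact div_pos hEx hEpos
  set F := Real.sqrt (2 * (1 + x / E)) with hFdef
  have hFpos : 0 < F := Real.sqrt_pos.mpr (by linarith)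
  have hFne : F ≠ 0 := ne_of_gt hFpos
  have hF2 : F ^ 2 = 2 * (1 + x / E) := Real.sq_sqrt (by linarith)
  have hF2' : F ^ 2 * E = 2 * (E + x) := by rw [hF2]; field_simp
  -- derivative of E
  have hEd : HasDerivAt (fun s => Real.sqrt (s ^ 2 + δ ^ 2)) (x / E) x := by
    have h1 : HasDerivAt (fun s : ℝ => s ^ 2 + δ ^ 2) (2 * x) x := by
      simpa using (hasDerivAt_pow 2 x).add_const (δ ^ 2)
    have h2 := (Real.hasDerivAt_sqrt (ne_of_gt hδ2)).comp x h1
    refine HasDerivAt.congr_deriv h2 ?_; symm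
    rw [← hEdef]; field_simp
  -- derivative of 1 + s/E(s)
  have hcd : HasDerivAt (fun s => 1 + s / Real.sqrt (s ^ 2 + δ ^ 2)) (δ ^ 2 / E ^ 3) x := by
    have h1 := ((hasDerivAt_id x).div hEd hEne).const_add 1
    refine HasDerivAt.congr_deriv h1 ?_; symm
    rw [← hEdef]; field_simp; simp only [id]; linear_combination (-1) * hE2
  -- derivative of δ/E(s)
  have hbd : HasDerivAt (fun s => δ / Real.sqrt (s ^ 2 + δ ^ 2)) (-(δ * x) / E ^ 3) x := by
    have h1 := (hasDerivAt_const x δ).div hEd hEne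
    refine HasDerivAt.congr_deriv h1 ?_; symm
    rw [← hEdef]; field_simp
    ring
  -- derivative of F(s)
  have hFd : HasDerivAt (fun s => Real.sqrt (2 * (1 + s / Real.sqrt (s ^ 2 + δ ^ 2))))
      (δ ^ 2 / E ^ 3 / F) x := by
    have h1 := hcd.const_mul 2
    have h2 := (Real.hasDerivAt_sqrt (by positivity : 2 * (1 + x / E) ≠ 0)).comp x h1
    refine HasDerivAt.congr_deriv h2 ?_; symm
    rw [← hFdef]; field_simp
  have hInv : HasDerivAt (fun s => (Real.sqrt (2 * (1 + s / Real.sqrt (s ^ 2 + δ ^ 2))))⁻¹)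
      (-(δ ^ 2 / E ^ 3 / F) / F ^ 2) x := hFd.inv hFne
  -- entry functions
  have h00fun : (fun s => Theta1D δ s 0 0) =
      fun s => (Real.sqrt (2 * (1 + s / Real.sqrt (s ^ 2 + δ ^ 2))))⁻¹ *
        (1 + s / Real.sqrt (s ^ 2 + δ ^ 2)) := by
    funext s; simp [Theta1D]
  have h01fun : (fun s => Theta1D δ s 0 1) =
      fun s => (Real.sqrt (2 * (1 + s / Real.sqrt (s ^ 2 + δ ^ 2))))⁻¹ *
        (δ / Real.sqrt (s ^ 2 + δ ^ 2)) := by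
    funext s; simp [Theta1D]
  have h10fun : (fun s => Theta1D δ s 1 0) =
      fun s => -((Real.sqrt (2 * (1 + s / Real.sqrt (s ^ 2 + δ ^ 2))))⁻¹ *
        (δ / Real.sqrt (s ^ 2 + δ ^ 2))) := by
    funext s; simp [Theta1D]
  have h11fun : (fun s => Theta1D δ s 1 1) = (fun s => Theta1D δ s 0 0) := by
    funext s; simp [Theta1D]
  have d00 : deriv (fun s => Theta1D δ s 0 0) x =
      -(δ ^ 2 / E ^ 3 / F) / F ^ 2 * (1 + x / E) + F⁻¹ * (δ ^ 2 / E ^ 3) := by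
    erw [h00fun, (hInv.mul hcd).deriv, ← hEdef, ← hFdef]
  have d01 : deriv (fun s => Theta1D δ s 0 1) x =
      -(δ ^ 2 / E ^ 3 / F) / F ^ 2 * (δ / E) + F⁻¹ * (-(δ * x) / E ^ 3) := by
    erw [h01fun, (hInv.mul hbd).deriv, ← hEdef, ← hFdef]
  have d10 : deriv (fun s => Theta1D δ s 1 0) x =
      -(-(δ ^ 2 / E ^ 3 / F) / F ^ 2 * (δ / E) + F⁻¹ * (-(δ * x) / E ^ 3)) := by
    erw [h10fun, ((hInv.mul hbd).neg).deriv, ← hEdef, ← hFdef]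
  have d11 : deriv (fun s => Theta1D δ s 1 1) x =
      -(δ ^ 2 / E ^ 3 / F) / F ^ 2 * (1 + x / E) + F⁻¹ * (δ ^ 2 / E ^ 3) := by
    rw [h11fun]; exact d00
  -- entries of Θ at x
  have T00 : Theta1D δ x 0 0 = F⁻¹ * (1 + x / E) := by
    simp [Theta1D, ← hEdef, ← hFdef]
  have T01 : Theta1D δ x 0 1 = F⁻¹ * (δ / E) := by
    simp [Theta1D, ← hEdef, ← hFdef]
  have T10 : Theta1D δ x 1 0 = -(F⁻¹ * (δ / E)) := by
    simp [Theta1D, ← hEdef, ← hFdef]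
  have T11 : Theta1D δ x 1 1 = F⁻¹ * (1 + x / E) := by
    simp [Theta1D, ← hEdef, ← hFdef]
  ext i j
  fin_cases i <;> fin_cases j <;>
    simp only [Matrix.mul_apply, Fin.sum_univ_two, Matrix.smul_apply, Matrix.transpose_apply,
      Matrix.of_apply, smul_eq_mul, Fin.isValue, Fin.mk_zero, Fin.mk_one,
      Matrix.cons_val_zero, Matrix.cons_val_one, Matrix.head_cons, Matrix.head_fin_const,
      d00, d01, d10, d11, T00, T01, T10, T11]
  · field_simp
    linear_combination (p*δ^2) * hE2 + (p*δ^2*E) * hF2'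
  · rw [← hE2]; field_simp
    linear_combination (4*p*(E+x)) * hE2 + (p*E*(F^2*E+2*(E+x)) - 2*p*(δ^2+x^2+x*E)) * hF2'
  · rw [← hE2]; field_simp
    linear_combination (-4*p*(E+x)) * hE2 - (p*E*(F^2*E+2*(E+x)) - 2*p*(δ^2+x^2+x*E)) * hF2'
  · field_simp
    linear_combination (p*δ^2) * hE2 + (p*δ^2*E) * hF2'
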